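/- Let L = ⊕_{n∈ℤ} Lₙ and L′ = ⊕_{n∈ℤ} L′ₙ be ℤ-graded Lie algebras, both generated by their local parts L₋₁⊕L₀⊕L₁ and L′₋₁⊕L′₀⊕L′₁, and suppose φ: L₋₁⊕L₀⊕L₁ → L′₋₁⊕L′₀⊕L′₁ is an isomorphism of local Lie algebras. If both L and L′ are transitive, then any graded Lie algebra epimorphism Φ: L → L′ extending φ is injective, hence an isomorphism. -/

import Mathlib

set_option synthInstance.maxHeartbeats 1000000 in
set_option maxHeartbeats 1000000 in
/-- let L, L′ be ℤ-graded Lie algebras generated by their local parts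
L₋₁⊕L₀⊕L₁ and L′₋₁⊕L′₀⊕L′₁, both transitive, and let Φ : L → L′ be a graded Lie algebra
epimorphism restricting to an isomorphism of the local parts. Then Φ is injective, hence
an isomorphism. -/
theorem stmt_19 (K : Type*) [Field K]
    (L : Type*) [LieRing L] [LieAlgebra K L] (L' : Type*) [LieRing L'] [LieAlgebra K L']
    (G : ℤ → Submodule K L) (hG : DirectSum.IsInternal G)
    (hGmul : ∀ m n : ℤ, ∀ u ∈ G m, ∀ v ∈ G n, ⁅u, v⁆ ∈ G (m + n))
    (G' : ℤ → Submodule K L') (hG' : DirectSum.IsInternal G')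
    (hG'mul : ∀ m n : ℤ, ∀ u ∈ G' m, ∀ v ∈ G' n, ⁅u, v⁆ ∈ G' (m + n))
    (hgen : LieSubalgebra.lieSpan K L ((G (-1) : Set L) ∪ (G 0 : Set L) ∪ (G 1 : Set L)) = ⊤)
    (hgen' : LieSubalgebra.lieSpan K L'
      ((G' (-1) : Set L') ∪ (G' 0 : Set L') ∪ (G' 1 : Set L')) = ⊤)
    (htrans_pos : ∀ n : ℤ, 1 ≤ n → ∀ u ∈ G n, (∀ v ∈ G (-1), ⁅u, v⁆ = 0) → u = 0)
    (htrans_neg : ∀ n : ℤ, n ≤ -1 → ∀ u ∈ G n, (∀ v ∈ G 1, ⁅u, v⁆ = 0) → u = 0)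
    (htrans_pos' : ∀ n : ℤ, 1 ≤ n → ∀ u ∈ G' n, (∀ v ∈ G' (-1), ⁅u, v⁆ = 0) → u = 0)
    (htrans_neg' : ∀ n : ℤ, n ≤ -1 → ∀ u ∈ G' n, (∀ v ∈ G' 1, ⁅u, v⁆ = 0) → u = 0)
    (Φ : L →ₗ⁅K⁆ L') (hsurj : Function.Surjective Φ)
    (hgraded : ∀ n : ℤ, Submodule.map (Φ : L →ₗ[K] L') (G n) = G' n)
    (hloc : Set.InjOn Φ ((G (-1) ⊔ G 0 ⊔ G 1 : Submodule K L) : Set L)) :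
    Function.Injective Φ := by
  have hmem' : ∀ n : ℤ, ∀ x : L, x ∈ G n → Φ x ∈ G' n := fun n x hx => by
    rw [← hgraded n]; exact Submodule.mem_map_of_mem hx
  have hloc0 : ∀ x ∈ (G (-1) ⊔ G 0 ⊔ G 1 : Submodule K L), Φ x = 0 → x = 0 := by
    intro x hx h
    exact hloc hx (zero_mem _) (by simpa using h)
  have hpos : ∀ n : ℤ, 1 ≤ n → ∀ x ∈ G n, Φ x = 0 → x = 0 := by
    refine fun n hn => Int.le_induction
      (motive := fun k _ => ∀ x ∈ G k, Φ x = 0 → x = 0) ?_ ?_ n hn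
    · intro x hx h
      exact hloc0 x (Submodule.mem_sup_right hx) h
    · intro n hn ih x hx h
      refine htrans_pos (n + 1) (by omega) x hx ?_
      intro v hv
      have hb : ⁅x, v⁆ ∈ G n := by simpa using hGmul (n + 1) (-1) x hx v hv
      refine ih ⁅x, v⁆ hb ?_
      rw [Φ.map_lie, h, zero_lie]
  have hneg : ∀ n : ℤ, n ≤ -1 → ∀ x ∈ G n, Φ x = 0 → x = 0 := by
    refine fun n hn => Int.le_induction_down
      (motive := fun k _ => ∀ x ∈ G k, Φ x = 0 → x = 0) ?_ ?_ n hn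
    · intro x hx h
      exact hloc0 x (Submodule.mem_sup_left (Submodule.mem_sup_left hx)) h
    · intro n hn ih x hx h
      refine htrans_neg (n - 1) (by omega) x hx ?_
      intro v hv
      have hb : ⁅x, v⁆ ∈ G n := by simpa using hGmul (n - 1) 1 x hx v hv
      refine ih ⁅x, v⁆ hb ?_
      rw [Φ.map_lie, h, zero_lie]
  have hall : ∀ n : ℤ, ∀ x ∈ G n, Φ x = 0 → x = 0 := by
    intro n x hx h
    rcases lt_trichotomy n 0 with h1 | h1 | h1
    · exact hneg n (by omega) x hx h
    · subst h1
      exact hloc0 x (Submodule.mem_sup_left (Submodule.mem_sup_right hx)) h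
    · exact hpos n (by omega) x hx h
  -- degreewise additive maps induced by Φ
  let F : ∀ n : ℤ, G n →+ G' n := fun n =>
    (((Φ : L →ₗ[K] L').restrict (p := G n) (q := G' n)
      (fun x hx => hmem' n x hx)).toAddMonoidHom)
  have hcomm : (DirectSum.coeAddMonoidHom G').comp
        (DFinsupp.mapRange.addMonoidHom F)
      = (Φ : L →ₗ[K] L').toAddMonoidHom.comp (DirectSum.coeAddMonoidHom G) := by
    refine DirectSum.addHom_ext fun n u => ?_
    show (DirectSum.coeAddMonoidHom G')
        (DFinsupp.mapRange (fun i (x : G i) => F i x) (fun i => (F i).map_zero)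
          (DFinsupp.single n u))
      = (Φ : L →ₗ[K] L').toAddMonoidHom ((DirectSum.coeAddMonoidHom G)
          (DirectSum.of (fun i => G i) n u))
    rw [DFinsupp.mapRange_single,
        show (DFinsupp.single n (F n u) : DirectSum ℤ fun i => G' i)
          = DirectSum.of (fun i => G' i) n (F n u) from rfl,
        DirectSum.coeAddMonoidHom_of, DirectSum.coeAddMonoidHom_of]
    rfl
  -- injectivity
  have key : ∀ x : L, Φ x = 0 → x = 0 := by
    intro x hx
    obtain ⟨y, rfl⟩ := hG.surjective x
    have h1 : DirectSum.coeAddMonoidHom G' (DFinsupp.mapRange.addMonoidHom F y) = 0 := by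
      have h : DirectSum.coeAddMonoidHom G' ((DFinsupp.mapRange.addMonoidHom F) y)
          = Φ ((DirectSum.coeAddMonoidHom G) y) := DFunLike.congr_fun hcomm y
      rw [h]
      exact hx
    have h2 : DFinsupp.mapRange.addMonoidHom F y = 0 := by
      apply hG'.injective
      rw [h1, map_zero]
    have h3 : ∀ n : ℤ, Φ ((y n : L)) = 0 := by
      intro n
      have := DFunLike.congr_fun h2 n
      rw [DFinsupp.mapRange.addMonoidHom_apply, DFinsupp.mapRange_apply] at this
      have := congrArg Subtype.val this
      simpa [F] using this
    have h4 : y = 0 := by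
      apply DFunLike.ext
      intro n
      have := hall n (y n) (y n).2 (h3 n)
      exact (by simpa using this : y n = 0).trans rfl
    rw [h4, map_zero]
  intro a b hab
  have : Φ (a - b) = 0 := by
    rw [show Φ (a - b) = Φ a - Φ b from (Φ : L →ₗ[K] L').map_sub a b, hab, sub_self]
  exact sub_eq_zero.mp (key _ this)
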